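/- Let b ≥ 2 and let τ ∈ S_b be the permutation τ(i) = b − 1 − i. Then for the swapped φ-functions one has ψ_b^{τ,+} = ψ_b^{id,−} and ψ_b^{τ,−} = ψ_b^{id,+}, i.e., for all x ∈ [0,1], max_{0≤h<b} φ_{b,h}^{τ}(x) = max_{0≤h<b} (−φ_{b,h}^{id}(x)) and max_{0≤h<b} (−φ_{b,h}^{τ}(x)) = max_{0≤h<b} φ_{b,h}^{id}(x). -/

import Mathlib

noncomputable section

/-- `A([0,h/b); k; Z_b^σ)`: number of `j < k` with `σ j < h`. -/
def countLt (σ : ℕ → ℕ) (k h : ℕ) : ℕ := ((Finset.range k).filter (fun j => σ j < h)).card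

/-- `A([h/b,1); k; Z_b^σ)`: number of `j < k` with `σ j ≥ h`. -/
def countGe (σ : ℕ → ℕ) (k h : ℕ) : ℕ := ((Finset.range k).filter (fun j => h ≤ σ j)).card

/-- The function `φ_{b,h}^σ`, extended `1`-periodically to all of `ℝ`: on `[(k−1)/b, k/b)`
it equals `A([0,h/b);k;Z_b^σ) − h·x` if `h ≤ σ(k−1)`, and
`(b−h)·x − A([h/b,1);k;Z_b^σ)` otherwise. -/
def phiPerm (b : ℕ) (σ : ℕ → ℕ) (h : ℕ) (x : ℝ) : ℝ :=
  let y := Int.fract x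
  let k1 := (⌊(b : ℝ) * y⌋).toNat
  if h ≤ σ k1 then (countLt σ (k1 + 1) h : ℝ) - h * y
  else ((b : ℝ) - h) * y - (countGe σ (k1 + 1) h : ℝ)

def psiPlus (b : ℕ) (σ : ℕ → ℕ) (x : ℝ) : ℝ := ⨆ h : Fin b, phiPerm b σ h x

def psiMinus (b : ℕ) (σ : ℕ → ℕ) (x : ℝ) : ℝ := ⨆ h : Fin b, -phiPerm b σ h x

def psi (b : ℕ) (σ : ℕ → ℕ) (x : ℝ) : ℝ := psiPlus b σ x + psiMinus b σ x

/-- `α_b^σ = inf_{n ≥ 1} (1/n) sup_{x ∈ [0,1]} Σ_{j=1}^n ψ_b^σ(x/b^j)`. -/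
def alphaPerm (b : ℕ) (σ : ℕ → ℕ) : ℝ :=
  ⨅ n : {n : ℕ // 1 ≤ n},
    (1 / (n.1 : ℝ)) * ⨆ x : Set.Icc (0 : ℝ) 1, ∑ j ∈ Finset.Icc 1 n.1, psi b σ (x.1 / (b : ℝ) ^ j)


lemma k1_lt (b : ℕ) (hb : 1 ≤ b) (x : ℝ) : (⌊(b:ℝ) * Int.fract x⌋).toNat < b := by
  have h0 : (0:ℝ) < b := by exact_mod_cast hb
  have h1 : (b:ℝ) * Int.fract x < b := by
    nlinarith [Int.fract_lt_one x, Int.fract_nonneg x]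
  have h2 : ⌊(b:ℝ) * Int.fract x⌋ < (b:ℤ) := Int.floor_lt.mpr (by exact_mod_cast h1)
  omega

lemma countLt_tau (b k h : ℕ) (hk : k ≤ b) :
    countLt (fun i => b - 1 - i) k h = countGe id k (b - h) := by
  unfold countLt countGe
  congr 1
  apply Finset.filter_congr
  intro j hj
  simp only [Finset.mem_range] at hj
  simp only [id]
  omega

lemma countGe_tau (b k h : ℕ) (hk : k ≤ b) :
    countGe (fun i => b - 1 - i) k h = countLt id k (b - h) := by
  unfold countLt countGe
  congr 1
  apply Finset.filter_congr
  intro j hj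
  simp only [Finset.mem_range] at hj
  simp only [id]
  omega

lemma key (b h : ℕ) (h1 : 1 ≤ h) (h2 : h < b) (x : ℝ) :
    phiPerm b (fun i => b - 1 - i) h x = - phiPerm b id (b - h) x := by
  have hb : 1 ≤ b := by omega
  have hk1 := k1_lt b hb x
  unfold phiPerm
  simp only [id]
  set y := Int.fract x
  set k1 := (⌊(b:ℝ) * y⌋).toNat with hk1def
  have hcast : ((b - h : ℕ) : ℝ) = (b : ℝ) - h := by
    push_cast [Nat.cast_sub h2.le]; ring
  by_cases hc : h ≤ b - 1 - k1
  · rw [if_pos hc, if_neg (by omega)]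
    rw [countLt_tau b (k1+1) h (by omega), hcast]
    ring
  · rw [if_neg hc, if_pos (by omega)]
    rw [countGe_tau b (k1+1) h (by omega), hcast]
    ring

lemma phi_zero (b : ℕ) (σ : ℕ → ℕ) (x : ℝ) : phiPerm b σ 0 x = 0 := by
  simp [phiPerm, countLt]

lemma key' (b : ℕ) (hb : 1 ≤ b) (x : ℝ) (h : Fin b) :
    phiPerm b (fun i => b - 1 - i) h x = - phiPerm b id ((b - h.val) % b) x := by
  rcases Nat.eq_zero_or_pos h.val with h0 | h1
  · rw [h0, phi_zero]
    simp [Nat.mod_self, phi_zero]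
  · rw [Nat.mod_eq_of_lt (by omega), key b h.val h1 h.isLt]

lemma e_surj (b : ℕ) (hb : 1 ≤ b) :
    Function.Surjective (fun h : Fin b => (⟨(b - h.val) % b, Nat.mod_lt _ (by omega)⟩ : Fin b)) := by
  have hinv : Function.Involutive
      (fun h : Fin b => (⟨(b - h.val) % b, Nat.mod_lt _ (by omega)⟩ : Fin b)) := by
    intro h
    ext
    simp only
    rcases Nat.eq_zero_or_pos h.val with h0 | h1
    · simp [h0, Nat.mod_self]
    · rw [Nat.mod_eq_of_lt (show b - h.val < b by omega)]
      have h2 : b - (b - h.val) = h.val := by omega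
      rw [h2, Nat.mod_eq_of_lt h.isLt]
  exact hinv.surjective

theorem stmt19 (b : ℕ) (hb : 2 ≤ b) :
    ∀ x : ℝ,
      psiPlus b (fun i => b - 1 - i) x = psiMinus b id x ∧
        psiMinus b (fun i => b - 1 - i) x = psiPlus b id x := by
  intro x
  have hb1 : 1 ≤ b := by omega
  constructor
  · unfold psiPlus psiMinus
    rw [← Function.Surjective.iSup_comp (e_surj b hb1) (fun h : Fin b => -phiPerm b id h x)]
    exact iSup_congr fun h => key' b hb1 x h
  · unfold psiPlus psiMinus
    rw [← Function.Surjective.iSup_comp (e_surj b hb1) (fun h : Fin b => phiPerm b id h x)]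
    exact iSup_congr fun h => by rw [key' b hb1 x h, neg_neg]
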